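/- Let x ∈ ℝ^d and ỹ ∈ ℝ^d (the L-SVRG anchor point). Then (1/(2L)) · (1/n) ∑_{i=1}^n ‖∇f_i(ỹ) − ∇f_i(x*)‖² ≤ f(x) − f(x*) + ∑_{i=1}^n D_{f_i}(ỹ, x*) − [ (1/n) ∑_{i=1}^n D_{f_i}(x, x*) + ((n−1)/n) ∑_{i=1}^n D_{f_i}(ỹ, x*) ], where the bracketed term is the expectation of ∑_{i=1}^n D_{f_i}(ỹ', x*) when the updated anchor ỹ' equals x with probability p = 1/n and equals ỹ with probability 1 − 1/n. -/

import Mathlib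

set_option linter.unusedSectionVars false
set_option linter.unusedVariables false
set_option maxHeartbeats 1000000

section helpersSVRG
variable {E : Type*} [NormedAddCommGroup E] [InnerProductSpace ℝ E] [CompleteSpace E]

lemma svrg_inner_grad (g : E → ℝ) (x v : E) (h : DifferentiableAt ℝ g x) :
    @inner ℝ _ _ (gradient g x) v = fderiv ℝ g x v := by
  have h1 : HasFDerivAt g ((InnerProductSpace.toDual ℝ E) (gradient g x)) x :=
    hasGradientAt_iff_hasFDerivAt.mp h.hasGradientAt
  rw [h1.fderiv]; rfl

lemma svrg_line_hasDerivAt (g : E → ℝ) (x v : E) (hg : Differentiable ℝ g) (t : ℝ) :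
    HasDerivAt (fun s : ℝ => g (x + s • v)) (fderiv ℝ g (x + t • v) v) t := by
  have h1 : HasDerivAt (fun s : ℝ => x + s • v) v t := by
    simpa using ((hasDerivAt_id t).smul_const v).const_add x
  exact ((hg (x + t • v)).hasFDerivAt.comp_hasDerivAt t h1)

lemma svrg_convex_first_order (g : E → ℝ) (hc : ConvexOn ℝ Set.univ g)
    (hg : Differentiable ℝ g) (x y : E) :
    g x + @inner ℝ _ _ (gradient g x) (y - x) ≤ g y := by
  set v := y - x with hv
  set φ : ℝ → ℝ := fun s => g (x + s • v) with hφ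
  have hd : ∀ t, HasDerivAt φ (fderiv ℝ g (x + t • v) v) t := svrg_line_hasDerivAt g x v hg
  have hφc : ConvexOn ℝ Set.univ φ := by
    have h2 := hc.comp_affineMap (AffineMap.lineMap x y : ℝ →ᵃ[ℝ] E)
    simp only [Set.preimage_univ] at h2
    have h3 : φ = g ∘ (AffineMap.lineMap x y : ℝ →ᵃ[ℝ] E) := by
      funext s
      simp [hφ, AffineMap.lineMap_apply, hv, add_comm]
    rw [h3]; exact h2
  have h0 : fderiv ℝ g (x + (0:ℝ) • v) v ≤ slope φ 0 1 :=
    hφc.le_slope_of_hasDerivAt trivial trivial one_pos (hd 0)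
  have hs : slope φ 0 1 = φ 1 - φ 0 := by simp [slope_def_field]
  rw [svrg_inner_grad g x v (hg x)]
  have e0 : φ 0 = g x := by simp [hφ]
  have e1 : φ 1 = g y := by simp [hφ, hv]
  rw [hs, e0, e1] at h0
  simp only [zero_smul, add_zero] at h0
  linarith

lemma svrg_descent_lemma (g : E → ℝ) (L : ℝ) (hL : 0 < L) (hg : Differentiable ℝ g)
    (hlip : ∀ a b, ‖gradient g a - gradient g b‖ ≤ L * ‖a - b‖) (x y : E) :
    g y ≤ g x + @inner ℝ _ _ (gradient g x) (y - x) + L / 2 * ‖y - x‖ ^ 2 := by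
  set v := y - x with hv
  have hgc : Continuous (gradient g) := by
    have hlw : LipschitzWith L.toNNReal (gradient g) := by
      apply LipschitzWith.of_dist_le_mul
      intro a b
      simpa [dist_eq_norm, Real.coe_toNNReal _ hL.le] using hlip a b
    exact hlw.continuous
  set ψ : ℝ → ℝ := fun t => @inner ℝ _ _ (gradient g (x + t • v)) v with hψ
  have hψc : Continuous ψ := by
    apply Continuous.inner
    · exact hgc.comp (by continuity)
    · exact continuous_const
  have hderiv : ∀ t ∈ Set.uIcc (0:ℝ) 1, HasDerivAt (fun s : ℝ => g (x + s • v)) (ψ t) t := by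
    intro t _
    have h5 := svrg_line_hasDerivAt g x v hg t
    rwa [← svrg_inner_grad g (x + t • v) v (hg _)] at h5
  have hint : IntervalIntegrable ψ MeasureTheory.volume 0 1 :=
    hψc.intervalIntegrable 0 1
  have hftc : ∫ t in (0:ℝ)..1, ψ t = g (x + (1:ℝ) • v) - g (x + (0:ℝ) • v) :=
    intervalIntegral.integral_eq_sub_of_hasDerivAt hderiv hint
  have e1 : x + (1:ℝ) • v = y := by simp [hv]
  have e0 : x + (0:ℝ) • v = x := by simp
  rw [e1, e0] at hftc
  have hbound : ∀ t ∈ Set.Icc (0:ℝ) 1, ψ t ≤ ψ 0 + L * t * ‖v‖ ^ 2 := by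
    intro t ht
    have h1 : ψ t - ψ 0 = @inner ℝ _ _ (gradient g (x + t • v) - gradient g (x + (0:ℝ) • v)) v := by
      simp [hψ, inner_sub_left]
    have h2 : ψ t - ψ 0 ≤ ‖gradient g (x + t • v) - gradient g (x + (0:ℝ) • v)‖ * ‖v‖ := by
      rw [h1]; exact real_inner_le_norm _ _
    have h3 : ‖gradient g (x + t • v) - gradient g (x + (0:ℝ) • v)‖ ≤ L * (t * ‖v‖) := by
      have h6 := hlip (x + t • v) (x + (0:ℝ) • v)
      have e : (x + t • v) - (x + (0:ℝ) • v) = t • v := by module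
      rw [e] at h6
      rwa [norm_smul, Real.norm_eq_abs, abs_of_nonneg ht.1] at h6
    have h4 : ‖gradient g (x + t • v) - gradient g (x + (0:ℝ) • v)‖ * ‖v‖ ≤ L * (t * ‖v‖) * ‖v‖ :=
      mul_le_mul_of_nonneg_right h3 (norm_nonneg v)
    nlinarith [norm_nonneg v]
  have hmono : ∫ t in (0:ℝ)..1, ψ t ≤ ∫ t in (0:ℝ)..1, (ψ 0 + L * t * ‖v‖ ^ 2) := by
    apply intervalIntegral.integral_mono_on zero_le_one hint
    · exact (Continuous.intervalIntegrable (by continuity) 0 1)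
    · exact hbound
  have hval : ∫ t in (0:ℝ)..1, (ψ 0 + L * t * ‖v‖ ^ 2) = ψ 0 + L / 2 * ‖v‖ ^ 2 := by
    have heq : (fun t : ℝ => ψ 0 + L * t * ‖v‖ ^ 2) = fun t : ℝ => ψ 0 + (L * ‖v‖ ^ 2) * t := by
      funext t; ring
    rw [heq, intervalIntegral.integral_add (intervalIntegrable_const)
      (Continuous.intervalIntegrable (by continuity : Continuous fun t : ℝ => L * ‖v‖ ^ 2 * t) 0 1),
      intervalIntegral.integral_const_mul, integral_id]
    simp; ring
  have hψ0 : ψ 0 = @inner ℝ _ _ (gradient g x) v := by simp [hψ]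
  rw [hftc] at hmono
  rw [hval, hψ0] at hmono
  linarith

lemma svrg_coco (g : E → ℝ) (L : ℝ) (hL : 0 < L) (hc : ConvexOn ℝ Set.univ g)
    (hg : Differentiable ℝ g)
    (hlip : ∀ a b, ‖gradient g a - gradient g b‖ ≤ L * ‖a - b‖) (x y : E) :
    ‖gradient g y - gradient g x‖ ^ 2 ≤
      2 * L * (g y - g x - @inner ℝ _ _ (gradient g x) (y - x)) := by
  set u := gradient g y - gradient g x with hu
  set z := y - L⁻¹ • u with hz
  set N := ‖u‖ ^ 2 with hN
  set A := @inner ℝ _ _ (gradient g x) (y - x) with hA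
  set a := @inner ℝ _ _ (gradient g x) u with ha
  set b := @inner ℝ _ _ (gradient g y) u with hb
  have ezy : z - y = -(L⁻¹ • u) := by rw [hz]; module
  have ezx : z - x = (y - x) - L⁻¹ • u := by rw [hz]; module
  have hdes1 := svrg_descent_lemma g L hL hg hlip y z
  have hcfo1 := svrg_convex_first_order g hc hg x z
  have e1 : @inner ℝ _ _ (gradient g y) (z - y) = -(L⁻¹ * b) := by
    rw [ezy, inner_neg_right, real_inner_smul_right]
  have e2 : ‖z - y‖ ^ 2 = L⁻¹ ^ 2 * N := by
    rw [ezy, norm_neg, norm_smul, Real.norm_eq_abs, abs_of_pos (inv_pos.mpr hL), hN]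
    ring
  have e3 : @inner ℝ _ _ (gradient g x) (z - x) = A - L⁻¹ * a := by
    rw [ezx, inner_sub_right, real_inner_smul_right, hA, ha]
  have e4 : b - a = N := by
    rw [hb, ha, ← inner_sub_left, ← hu, hN, real_inner_self_eq_norm_sq]
  rw [e1, e2] at hdes1
  rw [e3] at hcfo1
  have e5 : L⁻¹ * b - L⁻¹ * a = L⁻¹ * N := by rw [← mul_sub, e4]
  have key : L⁻¹ * N - L / 2 * (L⁻¹ ^ 2 * N) ≤ g y - g x - A := by linarith
  have hmul := mul_le_mul_of_nonneg_left key (by positivity : (0:ℝ) ≤ 2 * L)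
  have e6 : 2 * L * (L⁻¹ * N - L / 2 * (L⁻¹ ^ 2 * N)) = N := by
    field_simp
    ring
  linarith

end helpersSVRG

/-- Bregman divergence `D_g(y, x) = g(y) − g(x) − ⟨∇g(x), y − x⟩`. -/
noncomputable def bregDiv {d : ℕ} (g : EuclideanSpace ℝ (Fin d) → ℝ)
    (y x : EuclideanSpace ℝ (Fin d)) : ℝ :=
  g y - g x - @inner ℝ _ _ (gradient g x) (y - x)

theorem stmt_4 (n d : ℕ) (hn : 1 ≤ n) (hd : 1 ≤ d) (L : ℝ) (hL : 0 < L)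
    (f : Fin n → EuclideanSpace ℝ (Fin d) → ℝ)
    (hconv : ∀ i, ConvexOn ℝ Set.univ (f i))
    (hdiff : ∀ i, Differentiable ℝ (f i))
    (hsmooth : ∀ i x y, ‖gradient (f i) x - gradient (f i) y‖ ≤ L * ‖x - y‖)
    (F : EuclideanSpace ℝ (Fin d) → ℝ)
    (hF : F = fun x => (n : ℝ)⁻¹ * ∑ i, f i x)
    (xstar : EuclideanSpace ℝ (Fin d)) (hmin : ∀ z, F xstar ≤ F z)
    (x : EuclideanSpace ℝ (Fin d)) (ytil : EuclideanSpace ℝ (Fin d)) :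
    (1 / (2 * L)) * ((n : ℝ)⁻¹ * ∑ i, ‖gradient (f i) ytil - gradient (f i) xstar‖ ^ 2)
      ≤ F x - F xstar + ∑ i, bregDiv (f i) ytil xstar
        - ((n : ℝ)⁻¹ * ∑ i, bregDiv (f i) x xstar
            + (((n : ℝ) - 1) / n) * ∑ i, bregDiv (f i) ytil xstar) := by
  have hnR : (0:ℝ) < (n:ℝ) := by exact_mod_cast hn
  -- per-summand cocoercivity
  have hkey : ∀ i, ‖gradient (f i) ytil - gradient (f i) xstar‖ ^ 2
      ≤ 2 * L * bregDiv (f i) ytil xstar := fun i =>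
    svrg_coco (f i) L hL (hconv i) (hdiff i) (hsmooth i) xstar ytil
  set S := ∑ i, ‖gradient (f i) ytil - gradient (f i) xstar‖ ^ 2 with hS
  set T := ∑ i, bregDiv (f i) ytil xstar with hT
  set Bx := ∑ i, bregDiv (f i) x xstar with hBx
  have hST : S ≤ 2 * L * T := by
    rw [hS, hT, Finset.mul_sum]
    exact Finset.sum_le_sum fun i _ => hkey i
  -- gradient of F at xstar is zero
  have hsum : HasFDerivAt (fun z => ∑ i, f i z) (∑ i, fderiv ℝ (f i) xstar) xstar :=
    HasFDerivAt.fun_sum fun i _ => ((hdiff i) xstar).hasFDerivAt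
  have hFd : HasFDerivAt F ((n:ℝ)⁻¹ • ∑ i, fderiv ℝ (f i) xstar) xstar := by
    rw [hF]; exact hsum.const_mul _
  have hloc : IsLocalMin F xstar := Filter.Eventually.of_forall fun z => hmin z
  have h0 : (n:ℝ)⁻¹ • ∑ i, fderiv ℝ (f i) xstar = 0 := hloc.hasFDerivAt_eq_zero hFd
  have hsum0 : ∑ i, fderiv ℝ (f i) xstar = 0 := by
    rcases smul_eq_zero.mp h0 with h | h
    · exact absurd h (inv_ne_zero hnR.ne')
    · exact h
  have hinner0 : ∑ i, @inner ℝ _ _ (gradient (f i) xstar) (x - xstar) = 0 := by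
    have e : ∀ i : Fin n, @inner ℝ _ _ (gradient (f i) xstar) (x - xstar)
        = fderiv ℝ (f i) xstar (x - xstar) := fun i =>
      svrg_inner_grad (f i) xstar (x - xstar) ((hdiff i) xstar)
    calc ∑ i, @inner ℝ _ _ (gradient (f i) xstar) (x - xstar)
        = ∑ i, fderiv ℝ (f i) xstar (x - xstar) := Finset.sum_congr rfl fun i _ => e i
      _ = (∑ i, fderiv ℝ (f i) xstar) (x - xstar) := by
          rw [ContinuousLinearMap.sum_apply]
      _ = 0 := by rw [hsum0]; rfl
  -- F x - F xstar - n⁻¹ Bx = 0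
  have hzero : F x - F xstar - (n:ℝ)⁻¹ * Bx = 0 := by
    rw [hF, hBx]
    simp only [bregDiv]
    rw [Finset.sum_sub_distrib, Finset.sum_sub_distrib, hinner0]
    ring
  -- coefficient identity
  have hcoef : (((n:ℝ) - 1) / n) * T = T - (n:ℝ)⁻¹ * T := by
    field_simp
  have h1 : (1 / (2 * L)) * ((n:ℝ)⁻¹ * S) ≤ (1 / (2 * L)) * ((n:ℝ)⁻¹ * (2 * L * T)) := by
    apply mul_le_mul_of_nonneg_left _ (by positivity)
    exact mul_le_mul_of_nonneg_left hST (by positivity)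
  have h2 : (1 / (2 * L)) * ((n:ℝ)⁻¹ * (2 * L * T)) = (n:ℝ)⁻¹ * T := by
    field_simp
  linarith
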